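/- arXiv:2003.07357 — 2 statements merged into one kernel-verified Lean document; each statement's English description precedes it below -/
import Mathlib

section
/- Let p ≥ 1, let f : ℝ^p → ℝ be continuously differentiable with gradient g, 𝒞-strongly convex with g ℒ-Lipschitz, and let θ* satisfy g(θ*) = 0. Let a > 0 and q > 0 satisfy aℒ ≥ 1 and (q + 1)(aℒ − 1) ≤ 1. Then for every θ, e ∈ ℝ^p, the point θ⁺ := θ − a(g(θ) + e) satisfies ‖θ⁺ − θ*‖² ≤ u·‖θ − θ*‖² + v·‖e‖², where u := ℒ/𝒞 + a𝒞[(q + 1)(aℒ − 1) − 1] and v := a[aℒ(q + 1) − 1]/(q𝒞); moreover v > 0 and u ≥ 0. -/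
section Aux

variable {F : Type*} [NormedAddCommGroup F] [InnerProductSpace ℝ F] [CompleteSpace F]

lemma descent_aux' (f : F → ℝ) (g : F → F) (hgrad : ∀ x, HasGradientAt f (g x) x)
    (K : ℝ) (x d : F)
    (hK : ∀ t : ℝ, t ∈ Set.Ioo (0:ℝ) 1 →
      (inner ℝ (g (x + t • d) - g x) d : ℝ) ≤ K * t * ‖d‖ ^ 2) :
    f (x + d) ≤ f x + (inner ℝ (g x) d : ℝ) + K / 2 * ‖d‖ ^ 2 := by
  set φ : ℝ → ℝ := fun t =>
    f (x + t • d) - t * (inner ℝ (g x) d : ℝ) - K * t ^ 2 / 2 * ‖d‖ ^ 2 with hφdef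
  have hline : ∀ t : ℝ, HasDerivAt (fun t : ℝ => f (x + t • d))
      (inner ℝ (g (x + t • d)) d : ℝ) t := by
    intro t
    have h1 : HasDerivAt (fun t : ℝ => x + t • d) d t := by
      simpa using ((hasDerivAt_id t).smul_const d).const_add x
    have := (hgrad (x + t • d)).hasFDerivAt.comp_hasDerivAt t h1
    exact this
  have hφ' : ∀ t : ℝ, HasDerivAt φ
      ((inner ℝ (g (x + t • d)) d : ℝ) - (inner ℝ (g x) d : ℝ) - K * t * ‖d‖ ^ 2) t := by
    intro t
    have h2 : HasDerivAt (fun t : ℝ => t * (inner ℝ (g x) d : ℝ)) (inner ℝ (g x) d : ℝ) t := by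
      simpa using (hasDerivAt_id t).mul_const (inner ℝ (g x) d : ℝ)
    have h3 : HasDerivAt (fun t : ℝ => K * t ^ 2 / 2 * ‖d‖ ^ 2) (K * t * ‖d‖ ^ 2) t := by
      have h0 : HasDerivAt (fun t : ℝ => t ^ 2) (2 * t) t := by
        simpa using hasDerivAt_pow 2 t
      have := ((h0.const_mul K).div_const 2).mul_const (‖d‖ ^ 2)
      rw [show K * t * ‖d‖ ^ 2 = K * (2 * t) / 2 * ‖d‖ ^ 2 by ring]
      exact this
    have := ((hline t).sub h2).sub h3
    exact this
  have hanti : AntitoneOn φ (Set.Icc (0:ℝ) 1) := by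
    apply antitoneOn_of_hasDerivWithinAt_nonpos (convex_Icc 0 1)
      (fun t _ => ((hφ' t).continuousAt.continuousWithinAt))
      (f' := fun t => (inner ℝ (g (x + t • d)) d : ℝ) - (inner ℝ (g x) d : ℝ) - K * t * ‖d‖ ^ 2)
      (fun t _ => ((hφ' t).hasDerivWithinAt))
    intro t ht
    rw [interior_Icc] at ht
    have h5 : (inner ℝ (g (x + t • d) - g x) d : ℝ)
        = (inner ℝ (g (x + t • d)) d : ℝ) - inner ℝ (g x) d := by
      rw [inner_sub_left]
    linarith [hK t ht]
  have h01 := hanti (Set.mem_Icc.2 ⟨le_refl 0, zero_le_one⟩)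
    (Set.mem_Icc.2 ⟨zero_le_one, le_refl 1⟩) zero_le_one
  simp only [hφdef, zero_smul, add_zero, one_smul, zero_mul, zero_pow, mul_zero] at h01
  nlinarith [h01]

lemma upper_quad (f : F → ℝ) (g : F → F) (hgrad : ∀ x, HasGradientAt f (g x) x)
    (L : ℝ) (hL : 0 ≤ L) (hlip : ∀ x y : F, ‖g x - g y‖ ≤ L * ‖x - y‖) (u v : F) :
    f v ≤ f u + (inner ℝ (g u) (v - u) : ℝ) + L / 2 * ‖v - u‖ ^ 2 := by
  have h := descent_aux' f g hgrad L u (v - u) ?_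
  · simpa using h
  · intro t ht
    have h1 : (inner ℝ (g (u + t • (v - u)) - g u) (v - u) : ℝ)
        ≤ ‖g (u + t • (v - u)) - g u‖ * ‖v - u‖ := real_inner_le_norm _ _
    have h2 : ‖g (u + t • (v - u)) - g u‖ ≤ L * ‖t • (v - u)‖ := by
      have := hlip (u + t • (v - u)) u
      simpa using this
    have h3 : ‖t • (v - u)‖ = t * ‖v - u‖ := by
      rw [norm_smul, Real.norm_eq_abs, abs_of_pos ht.1]
    nlinarith [norm_nonneg (v - u), h1, h2, h3, mul_nonneg hL (norm_nonneg (v - u))]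

lemma lower_quad (f : F → ℝ) (g : F → F) (hgrad : ∀ x, HasGradientAt f (g x) x)
    (C : ℝ) (hsc : ∀ x y : F, C * ‖x - y‖ ^ 2 ≤ (inner ℝ (x - y) (g x - g y) : ℝ)) (u v : F) :
    f u + (inner ℝ (g u) (v - u) : ℝ) + C / 2 * ‖v - u‖ ^ 2 ≤ f v := by
  have hgrad' : ∀ x, HasGradientAt (fun w => -f w) (-g x) x := by
    intro x
    have h := (hgrad x).hasFDerivAt.neg
    have h2 := h.hasGradientAt
    exact (by simpa using h2 : HasGradientAt (-f) (-g x) x)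
  have h := descent_aux' (fun w => -f w) (fun x => -g x) hgrad' (-C) u (v - u) ?_
  · simp only [add_sub_cancel] at h
    have : (inner ℝ (-g u) (v - u) : ℝ) = -(inner ℝ (g u) (v - u) : ℝ) := by
      rw [inner_neg_left]
    nlinarith [h]
  · intro t ht
    have hmono := hsc (u + t • (v - u)) u
    simp only [add_sub_cancel_left] at hmono
    have h4 : (inner ℝ (t • (v - u)) (g (u + t • (v - u)) - g u) : ℝ)
        = t * (inner ℝ (v - u) (g (u + t • (v - u)) - g u) : ℝ) := real_inner_smul_left _ _ _
    have h5 : ‖t • (v - u)‖ = t * ‖v - u‖ := by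
      rw [norm_smul, Real.norm_eq_abs, abs_of_pos ht.1]
    have h6 : (inner ℝ (-g (u + t • (v - u)) - -g u) (v - u) : ℝ)
        = -(inner ℝ (v - u) (g (u + t • (v - u)) - g u) : ℝ) := by
      rw [real_inner_comm]
      rw [inner_sub_right, inner_sub_right, inner_neg_right, inner_neg_right]
      ring
    rw [h6]
    rw [h5] at hmono
    rw [h4] at hmono
    nlinarith [hmono, ht.1]

lemma interp_identity (C R : ℝ) (hR : R ≠ 0) (x y G1 G2 : F) :
    R ^ 2 * (((inner ℝ G2 ((y - R⁻¹ • ((G2 - G1) - C • (y - x))) - y) : ℝ)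
          + (R + C) / 2 * ‖(y - R⁻¹ • ((G2 - G1) - C • (y - x))) - y‖ ^ 2)
        - ((inner ℝ G1 ((y - R⁻¹ • ((G2 - G1) - C • (y - x))) - x) : ℝ)
          + C / 2 * ‖(y - R⁻¹ • ((G2 - G1) - C • (y - x))) - x‖ ^ 2)
        + ((inner ℝ G1 ((x + R⁻¹ • ((G2 - G1) - C • (y - x))) - x) : ℝ)
          + (R + C) / 2 * ‖(x + R⁻¹ • ((G2 - G1) - C • (y - x))) - x‖ ^ 2)
        - ((inner ℝ G2 ((x + R⁻¹ • ((G2 - G1) - C • (y - x))) - y) : ℝ)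
          + C / 2 * ‖(x + R⁻¹ • ((G2 - G1) - C • (y - x))) - y‖ ^ 2))
      = R * ((R + 2 * C) * (inner ℝ (y - x) (G2 - G1) : ℝ)
          - (C * (R + C) * ‖y - x‖ ^ 2 + ‖G2 - G1‖ ^ 2)) := by
  set P : F := (G2 - G1) - C • (y - x) with hP
  have h1 : (y - R⁻¹ • P) - y = -(R⁻¹ • P) := by module
  have h2 : (y - R⁻¹ • P) - x = (y - x) - R⁻¹ • P := by module
  have h3 : (x + R⁻¹ • P) - x = R⁻¹ • P := by module
  have h4 : (x + R⁻¹ • P) - y = R⁻¹ • P - (y - x) := by module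
  simp only [h1, h2, h3, h4, ← real_inner_self_eq_norm_sq]
  simp only [hP]
  simp only [inner_sub_left, inner_sub_right, inner_smul_left, inner_smul_right, inner_neg_left,
    inner_neg_right, conj_trivial, real_inner_comm x y, real_inner_comm G1 G2,
    real_inner_comm x G1, real_inner_comm x G2, real_inner_comm y G1, real_inner_comm y G2]
  field_simp
  ring

lemma interp (f : F → ℝ) (g : F → F) (hgrad : ∀ x, HasGradientAt f (g x) x)
    (C L : ℝ) (hC : 0 < C) (hCL : C ≤ L)
    (hsc : ∀ x y : F, C * ‖x - y‖ ^ 2 ≤ (inner ℝ (x - y) (g x - g y) : ℝ))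
    (hlip : ∀ x y : F, ‖g x - g y‖ ≤ L * ‖x - y‖) (x y : F) :
    C * L * ‖y - x‖ ^ 2 + ‖g y - g x‖ ^ 2 ≤ (C + L) * (inner ℝ (y - x) (g y - g x) : ℝ) := by
  rcases eq_or_lt_of_le hCL with hEq | hLt
  · -- C = L case: pointwise
    subst hEq
    have h1 := hsc y x
    have h2 := hlip y x
    have h3 : (inner ℝ (y - x) (g y - g x) : ℝ) ≤ ‖y - x‖ * ‖g y - g x‖ := real_inner_le_norm _ _
    nlinarith [norm_nonneg (y - x), norm_nonneg (g y - g x), h1, h2, h3,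
      mul_le_mul_of_nonneg_left h2 (norm_nonneg (y - x)),
      mul_le_mul_of_nonneg_left h2 (mul_nonneg hC.le (norm_nonneg (y - x)))]
  · set R : ℝ := L - C with hRdef
    have hR : 0 < R := by simp [hRdef]; linarith
    have hRne : R ≠ 0 := ne_of_gt hR
    set G1 := g x
    set G2 := g y
    set P : F := (G2 - G1) - C • (y - x) with hP
    set w : F := y - R⁻¹ • P with hw
    set w' : F := x + R⁻¹ • P with hw'
    have hI1 := lower_quad f g hgrad C hsc x w
    have hI2 := upper_quad f g hgrad L (by linarith) hlip y w
    have hII1 := lower_quad f g hgrad C hsc y w'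
    have hII2 := upper_quad f g hgrad L (by linarith) hlip x w'
    have hsum : 0 ≤ ((inner ℝ G2 (w - y) : ℝ) + L / 2 * ‖w - y‖ ^ 2)
        - ((inner ℝ G1 (w - x) : ℝ) + C / 2 * ‖w - x‖ ^ 2)
        + ((inner ℝ G1 (w' - x) : ℝ) + L / 2 * ‖w' - x‖ ^ 2)
        - ((inner ℝ G2 (w' - y) : ℝ) + C / 2 * ‖w' - y‖ ^ 2) := by linarith
    have hid := interp_identity (F := F) C R hRne x y G1 G2
    have hLRC : R + C = L := by simp [hRdef]
    rw [hLRC] at hid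
    rw [show y - R⁻¹ • ((G2 - G1) - C • (y - x)) = w by rw [hw, hP],
        show x + R⁻¹ • ((G2 - G1) - C • (y - x)) = w' by rw [hw', hP]] at hid
    have hmain : 0 ≤ R * ((R + 2 * C) * (inner ℝ (y - x) (G2 - G1) : ℝ)
        - (C * L * ‖y - x‖ ^ 2 + ‖G2 - G1‖ ^ 2)) := by
      rw [← hid]
      nlinarith [hsum, sq_nonneg R]
    have hfin : 0 ≤ (R + 2 * C) * (inner ℝ (y - x) (G2 - G1) : ℝ)
        - (C * L * ‖y - x‖ ^ 2 + ‖G2 - G1‖ ^ 2) := by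
      rcases (mul_nonneg_iff_of_pos_left hR).mp hmain with h
      exact h
    have hR2C : R + 2 * C = C + L := by rw [hRdef]; ring
    rw [hR2C] at hfin
    linarith
end Aux

set_option maxHeartbeats 1000000 in
lemma final_algebra (C L a q X E M : ℝ) (hC : 0 < C) (hCL : C ≤ L) (ha : 0 < a) (hq : 0 < q)
    (haL : 1 ≤ a * L) (haLq : (q + 1) * (a * L - 1) ≤ 1)
    (hX : 0 ≤ X) (hE : 0 ≤ E) (hM : 0 ≤ M)
    (hB : M ^ 2 ≤ (1 - a * C) ^ 2 * X ^ 2 ∨ M ^ 2 ≤ (a * L - 1) ^ 2 * X ^ 2) :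
    (M + a * E) ^ 2 ≤ (L / C + a * C * ((q + 1) * (a * L - 1) - 1)) * X ^ 2 +
      a * (a * L * (q + 1) - 1) / (q * C) * E ^ 2 := by
  have hr : 0 ≤ a * L - 1 := by linarith
  have haL2 : a * L ≤ 2 := by nlinarith
  have hT0 : 0 ≤ L - C + C * (a * L - 1) := by nlinarith [mul_nonneg hC.le hr]
  have hCM : C * M ≤ (L - C + C * (a * L - 1)) * X := by
    have h2 : (C * M) ^ 2 ≤ ((L - C + C * (a * L - 1)) * X) ^ 2 := by
      rcases hB with h | h
      · have hTge : C * (1 - a * C) ≤ L - C + C * (a * L - 1) := by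
          nlinarith [sq_nonneg (L - C), mul_nonneg (mul_nonneg ha.le hC.le) (sub_nonneg.2 hCL),
            mul_nonneg (mul_nonneg (mul_nonneg ha.le hC.le) hC.le) (sub_nonneg.2 hCL)]
        have hTge2 : -(L - C + C * (a * L - 1)) ≤ C * (1 - a * C) := by
          nlinarith [mul_nonneg (mul_nonneg ha.le hC.le) (sub_nonneg.2 hCL)]
        have hprod : 0 ≤ ((L - C + C * (a * L - 1)) - C * (1 - a * C)) *
            ((L - C + C * (a * L - 1)) + C * (1 - a * C)) :=
          mul_nonneg (by linarith) (by linarith)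
        nlinarith [hprod, sq_nonneg X, h, mul_pos hC hC,
          mul_nonneg hprod (sq_nonneg X)]
      · have hTge : C * (a * L - 1) ≤ L - C + C * (a * L - 1) := by linarith
        have hprod : 0 ≤ ((L - C + C * (a * L - 1)) - C * (a * L - 1)) *
            ((L - C + C * (a * L - 1)) + C * (a * L - 1)) :=
          mul_nonneg (by linarith) (by nlinarith [mul_nonneg hC.le hr])
        nlinarith [hprod, sq_nonneg X, h, mul_pos hC hC,
          mul_nonneg hprod (sq_nonneg X)]
    by_contra hcon
    push_neg at hcon
    nlinarith [h2, mul_nonneg hT0 hX, mul_nonneg hC.le hM]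
  have hMK : M ^ 2 ≤ (1 - 2 * a * C + a ^ 2 * L * C) * X ^ 2 := by
    rcases hB with h | h
    · nlinarith [h, mul_nonneg (mul_nonneg (mul_nonneg (sq_nonneg a) hC.le)
        (sub_nonneg.2 hCL)) (sq_nonneg X)]
    · nlinarith [h, mul_nonneg (mul_nonneg (mul_nonneg ha.le (sub_nonneg.2 hCL))
        (by linarith : (0:ℝ) ≤ 2 - a * L)) (sq_nonneg X)]
  have A1 : 0 ≤ q * C * ((1 - 2 * a * C + a ^ 2 * L * C) * X ^ 2 - M ^ 2) :=
    mul_nonneg (by positivity) (by linarith)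
  have A2 : 2 * a * q * E * (C * M) ≤ 2 * a * q * E * ((L - C + C * (a * L - 1)) * X) :=
    mul_le_mul_of_nonneg_left hCM (by positivity)
  have A3 : 0 ≤ q * (L - C) * (X - a * E) ^ 2 :=
    mul_nonneg (mul_nonneg hq.le (by linarith)) (sq_nonneg _)
  have A4 : 0 ≤ a * (a * L - 1) * (q * C * X - E) ^ 2 :=
    mul_nonneg (mul_nonneg ha.le hr) (sq_nonneg _)
  have hGC : q * C * (M + a * E) ^ 2 ≤
      q * L * X ^ 2 + q * C ^ 2 * a * ((q + 1) * (a * L - 1) - 1) * X ^ 2 +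
        a * (a * L * (q + 1) - 1) * E ^ 2 := by
    linarith [A1, A2, A3, A4]
  have hqC : (0:ℝ) < q * C := by positivity
  rw [← mul_le_mul_iff_right₀ hqC]
  have expand : q * C * ((L / C + a * C * ((q + 1) * (a * L - 1) - 1)) * X ^ 2 +
      a * (a * L * (q + 1) - 1) / (q * C) * E ^ 2) =
      q * L * X ^ 2 + q * C ^ 2 * a * ((q + 1) * (a * L - 1) - 1) * X ^ 2 +
        a * (a * L * (q + 1) - 1) * E ^ 2 := by
    field_simp
  rw [expand]
  exact hGC

set_option maxHeartbeats 1000000 in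
/-- One-step error propagation: for a `𝒞`-strongly convex loss with `ℒ`-Lipschitz
gradient `g` and root `θ*`, a gain `a > 0` and slack `q > 0` with `aℒ ≥ 1` and
`(q+1)(aℒ−1) ≤ 1`, the update `θ⁺ = θ − a(g θ + e)` satisfies
`‖θ⁺ − θ*‖² ≤ u‖θ − θ*‖² + v‖e‖²` where
`u = ℒ/𝒞 + a𝒞[(q+1)(aℒ−1)−1]` and `v = a[aℒ(q+1)−1]/(q𝒞)`; moreover `v > 0`, `u ≥ 0`. -/
theorem stmt_18 {p : ℕ} (hp : 1 ≤ p)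
    (f : EuclideanSpace ℝ (Fin p) → ℝ)
    (g : EuclideanSpace ℝ (Fin p) → EuclideanSpace ℝ (Fin p))
    (C L : ℝ) (hC : 0 < C)
    (hsmooth : ContDiff ℝ 1 f)
    (hgrad : ∀ x, HasGradientAt f (g x) x)
    (hsc : ∀ x y : EuclideanSpace ℝ (Fin p),
      C * ‖x - y‖ ^ 2 ≤ (inner ℝ (x - y) (g x - g y) : ℝ))
    (hlip : ∀ x y : EuclideanSpace ℝ (Fin p), ‖g x - g y‖ ≤ L * ‖x - y‖)
    (θstar : EuclideanSpace ℝ (Fin p)) (hroot : g θstar = 0)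
    (a q : ℝ) (ha : 0 < a) (hq : 0 < q)
    (haL : 1 ≤ a * L) (haLq : (q + 1) * (a * L - 1) ≤ 1) :
    (∀ θ e : EuclideanSpace ℝ (Fin p),
      ‖θ - a • (g θ + e) - θstar‖ ^ 2 ≤
        (L / C + a * C * ((q + 1) * (a * L - 1) - 1)) * ‖θ - θstar‖ ^ 2 +
          a * (a * L * (q + 1) - 1) / (q * C) * ‖e‖ ^ 2) ∧
    0 < a * (a * L * (q + 1) - 1) / (q * C) ∧
    0 ≤ L / C + a * C * ((q + 1) * (a * L - 1) - 1) := by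
  have hCL : C ≤ L := by
    have h0 : 0 < p := hp
    set v : EuclideanSpace ℝ (Fin p) := EuclideanSpace.single (⟨0, h0⟩ : Fin p) (1:ℝ) with hv
    have hnv : ‖v‖ = 1 := by rw [hv, EuclideanSpace.norm_single]; norm_num
    have h1 := hsc v 0
    have h2 := hlip v 0
    have h3 : (inner ℝ (v - 0) (g v - g 0) : ℝ) ≤ ‖v - 0‖ * ‖g v - g 0‖ := real_inner_le_norm _ _
    rw [sub_zero] at h1 h2 h3
    rw [hnv] at h1 h2 h3
    nlinarith [h1, h2, h3, norm_nonneg (g v - g 0)]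
  refine ⟨?_, ?_, ?_⟩
  · intro θ e
    have hint := interp f g hgrad C L hC hCL hsc hlip θstar θ
    rw [hroot, sub_zero] at hint
    have hN := hlip θ θstar
    rw [hroot, sub_zero] at hN
    have hCS : (inner ℝ (θ - θstar) (g θ) : ℝ) ≤ ‖θ - θstar‖ * ‖g θ‖ := real_inner_le_norm _ _
    have hM2 : ‖(θ - θstar) - a • (g θ)‖ ^ 2 =
        ‖θ - θstar‖ ^ 2 - 2 * a * (inner ℝ (θ - θstar) (g θ) : ℝ) + a ^ 2 * ‖g θ‖ ^ 2 := by
      rw [norm_sub_sq_real, real_inner_smul_right, norm_smul, Real.norm_eq_abs, abs_of_pos ha]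
      ring
    set X := ‖θ - θstar‖ with hXdef
    set N := ‖g θ‖ with hNdef
    set M := ‖(θ - θstar) - a • (g θ)‖ with hMdef
    set S : ℝ := (inner ℝ (θ - θstar) (g θ) : ℝ) with hSdef
    have hX : 0 ≤ X := norm_nonneg _
    have hNn : 0 ≤ N := norm_nonneg _
    have hMn : 0 ≤ M := norm_nonneg _
    have hCLpos : (0:ℝ) < C + L := by linarith
    have hfact : 0 ≤ (N - C * X) * (L * X - N) := by
      nlinarith [hint, mul_le_mul_of_nonneg_left hCS (le_of_lt hCLpos)]
    have hB : M ^ 2 ≤ (1 - a * C) ^ 2 * X ^ 2 ∨ M ^ 2 ≤ (a * L - 1) ^ 2 * X ^ 2 := by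
      have hM2' : (C + L) * M ^ 2 =
          (C + L) * X ^ 2 - 2 * a * ((C + L) * S) + a ^ 2 * ((C + L) * N ^ 2) := by
        rw [hM2]; ring
      have e1 : 2 * a * (C * L * X ^ 2 + N ^ 2) ≤ 2 * a * ((C + L) * S) :=
        mul_le_mul_of_nonneg_left hint (by linarith)
      rcases le_total (a * (C + L)) 2 with hc | hc
      · left
        have hNC : C * X ≤ N := by
          by_contra hcon
          push_neg at hcon
          nlinarith [hfact, mul_pos (sub_pos.2 hcon) (sub_pos.2 hcon),
            mul_nonneg (sub_pos.2 hcon).le (mul_nonneg hX (sub_nonneg.2 hCL))]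
        have e2 : 0 ≤ (2 * a - a ^ 2 * (C + L)) * (N ^ 2 - C ^ 2 * X ^ 2) := by
          apply mul_nonneg
          · nlinarith
          · nlinarith [mul_nonneg (sub_nonneg.2 hNC) (add_nonneg hNn (mul_nonneg hC.le hX))]
        have hkey : (C + L) * M ^ 2 ≤ (C + L) * ((1 - a * C) ^ 2 * X ^ 2) := by
          nlinarith [hM2', e1, e2]
        exact le_of_mul_le_mul_left hkey hCLpos
      · right
        have e2 : 0 ≤ (a ^ 2 * (C + L) - 2 * a) * (L ^ 2 * X ^ 2 - N ^ 2) := by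
          apply mul_nonneg
          · nlinarith
          · nlinarith [hN, hNn]
        have hkey : (C + L) * M ^ 2 ≤ (C + L) * ((a * L - 1) ^ 2 * X ^ 2) := by
          nlinarith [hM2', e1, e2]
        exact le_of_mul_le_mul_left hkey hCLpos
    have htri : ‖θ - a • (g θ + e) - θstar‖ ≤ M + a * ‖e‖ := by
      have heq : θ - a • (g θ + e) - θstar = ((θ - θstar) - a • (g θ)) - a • e := by
        module
      rw [heq]
      calc ‖((θ - θstar) - a • (g θ)) - a • e‖ ≤ ‖(θ - θstar) - a • (g θ)‖ + ‖a • e‖ :=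
            norm_sub_le _ _
        _ = M + a * ‖e‖ := by
            rw [norm_smul, Real.norm_eq_abs, abs_of_pos ha, ← hMdef]
    have hfin := final_algebra C L a q X ‖e‖ M hC hCL ha hq haL haLq hX (norm_nonneg e) hMn hB
    calc ‖θ - a • (g θ + e) - θstar‖ ^ 2 ≤ (M + a * ‖e‖) ^ 2 := by
          nlinarith [htri, norm_nonneg (θ - a • (g θ + e) - θstar),
            mul_nonneg ha.le (norm_nonneg e)]
      _ ≤ _ := hfin
  · apply div_pos
    · nlinarith [mul_nonneg (by linarith : (0:ℝ) ≤ a * L - 1) (by linarith : (0:ℝ) ≤ q + 1),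
        mul_pos ha hq]
    · positivity
  · have hdiv : 1 ≤ L / C := (one_le_div hC).2 hCL
    nlinarith [hdiv, sq_nonneg (1 - a * C),
      mul_nonneg (mul_nonneg (sq_nonneg a) hC.le) (sub_nonneg.2 hCL),
      mul_nonneg (mul_nonneg (mul_nonneg ha.le hC.le) hq.le) (by linarith : (0:ℝ) ≤ a * L - 1)]
end

section
/- Let (y_k), (s_k), (c_k) be real sequences with y_k ≥ 0 for all k, 0 ≤ s_k ≤ s̄ for all k with s̄ < 1, and 0 < x̲ ≤ c_k/(1 − s_k) ≤ X < ∞ for all k (for some constants x̲, X). If y_{k+1} ≤ s_k·y_k + c_k for all k, then limsup_{k→∞} y_k ≤ limsup_{k→∞} c_k/(1 − s_k). -/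
/-- Scalar recursion limsup bound: if `y (k+1) ≤ s k * y k + c k` with `y k ≥ 0`,
`0 ≤ s k ≤ s̄ < 1`, and `0 < x̲ ≤ c k / (1 - s k) ≤ X < ∞` for all `k`, then
`limsup_k y k ≤ limsup_k c k / (1 - s k)`. -/
theorem stmt_19 (y s c : ℕ → ℝ) (hy : ∀ k, 0 ≤ y k)
    (sbar : ℝ) (hsbar : sbar < 1) (hs : ∀ k, 0 ≤ s k ∧ s k ≤ sbar)
    (xlo X : ℝ) (hxlo : 0 < xlo)
    (hratio : ∀ k, xlo ≤ c k / (1 - s k) ∧ c k / (1 - s k) ≤ X)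
    (hrec : ∀ k, y (k + 1) ≤ s k * y k + c k) :
    Filter.limsup y Filter.atTop ≤
      Filter.limsup (fun k => c k / (1 - s k)) Filter.atTop := by
  set L := Filter.limsup (fun k => c k / (1 - s k)) Filter.atTop with hL
  have hsbar0 : 0 ≤ sbar := le_trans (hs 0).1 (hs 0).2
  have h1s : ∀ k, 0 < 1 - s k := fun k => by linarith [(hs k).2]
  -- suffices to show limsup y ≤ L + ε for all ε > 0
  refine le_of_forall_pos_le_add fun ε hε => ?_
  have hbd : Filter.IsBoundedUnder (· ≤ ·) Filter.atTop (fun k => c k / (1 - s k)) :=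
    Filter.isBoundedUnder_of ⟨X, fun k => (hratio k).2⟩
  have hLlt : L < L + ε / 2 := by linarith
  have hev : ∀ᶠ k in Filter.atTop, c k / (1 - s k) < L + ε / 2 :=
    Filter.eventually_lt_of_limsup_lt hLlt hbd
  obtain ⟨N, hN⟩ := Filter.eventually_atTop.mp hev
  set M := L + ε / 2 with hM
  have hc : ∀ k ≥ N, c k ≤ (1 - s k) * M := fun k hk => by
    have := (div_lt_iff₀ (h1s k)).mp (hN k hk)
    linarith [this]
  set z : ℕ → ℝ := fun k => max (y k - M) 0 with hz
  have hz0 : ∀ k, 0 ≤ z k := fun k => le_max_right _ _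
  have hyz : ∀ k, y k ≤ M + z k := fun k => by
    have := le_max_left (y k - M) 0; simp only [hz]; linarith
  have hcontr : ∀ k ≥ N, z (k + 1) ≤ sbar * z k := by
    intro k hk
    have h1 : y (k + 1) ≤ s k * (M + z k) + (1 - s k) * M := by
      have := hrec k
      have h2 := hc k hk
      have h3 := mul_le_mul_of_nonneg_left (hyz k) (hs k).1
      linarith
    have h4 : y (k + 1) - M ≤ s k * z k := by ring_nf at h1 ⊢; linarith
    have h5 : s k * z k ≤ sbar * z k := mul_le_mul_of_nonneg_right (hs k).2 (hz0 k)
    exact max_le (by linarith) (by positivity)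
  have hiter : ∀ m, z (N + m) ≤ sbar ^ m * z N := by
    intro m
    induction m with
    | zero => simp
    | succ m ih =>
      have := hcontr (N + m) (Nat.le_add_right N m)
      calc z (N + (m + 1)) = z (N + m + 1) := by ring_nf
        _ ≤ sbar * z (N + m) := this
        _ ≤ sbar * (sbar ^ m * z N) := mul_le_mul_of_nonneg_left ih hsbar0
        _ = sbar ^ (m + 1) * z N := by ring
  -- pick m0 with sbar^m0 * z N < ε/2
  have htend : Filter.Tendsto (fun m => sbar ^ m * z N) Filter.atTop (nhds 0) := by
    have := tendsto_pow_atTop_nhds_zero_of_lt_one hsbar0 hsbar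
    simpa using this.mul_const (z N)
  obtain ⟨m0, hm0⟩ := Filter.eventually_atTop.mp
    (htend.eventually (eventually_lt_nhds (show (0:ℝ) < ε / 2 by linarith)))
  have hyev : ∀ᶠ k in Filter.atTop, y k ≤ L + ε := by
    rw [Filter.eventually_atTop]
    refine ⟨N + m0, fun k hk => ?_⟩
    obtain ⟨m, rfl⟩ := Nat.exists_eq_add_of_le (le_trans (Nat.le_add_right N m0) hk)
    have hmm0 : m0 ≤ m := by omega
    have hpow : sbar ^ m ≤ sbar ^ m0 := pow_le_pow_of_le_one hsbar0 hsbar.le hmm0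
    have : z (N + m) ≤ sbar ^ m0 * z N :=
      le_trans (hiter m) (mul_le_mul_of_nonneg_right hpow (hz0 N))
    have h6 : sbar ^ m0 * z N < ε / 2 := hm0 m0 le_rfl
    have h7 : z (N + m) < ε / 2 := lt_of_le_of_lt this h6
    have := hyz (N + m)
    rw [hM] at this
    linarith
  refine Filter.limsup_le_of_le ?_ hyev
  exact (Filter.isBoundedUnder_of ⟨0, hy⟩ :
    Filter.IsBoundedUnder (· ≥ ·) Filter.atTop y).isCoboundedUnder_le
end
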